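/- Proposition: The no proxies control is fragile. Specifically, there exist a game (X, λ_w, p, G, v_q, v_u, ω) and δ̄ > 0 such that for every ε > 0 there exists a no-proxies-controlled ε-equilibrium (c̄, d) whose ℓ²-distance from every no-proxies-controlled equilibrium of the game is at least δ̄; hence the no proxies control does not satisfy the definition of being not fragile. -/

import Mathlib

/-!
Formalization of the Coate–Loury statistical discrimination model with
machine-learning (contractible) beliefs, following Zhu,
"The Impact of Equal Opportunity on Statistical Discrimination".
-/

open scoped BigOperators
open MeasureTheory

noncomputable section

attribute [local instance] Classical.propDecidable

/-- Group identities `I = {w, b}`. -/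
inductive GrpI
  | w
  | b
deriving DecidableEq

instance : Fintype GrpI where
  elems := {GrpI.w, GrpI.b}
  complete := by intro x; cases x <;> simp

/-- Classes `Y = {q, u}` (qualified / unqualified). -/
inductive Cls
  | q
  | u
deriving DecidableEq

instance : Fintype Cls where
  elems := {Cls.q, Cls.u}
  complete := by intro x; cases x <;> simp

/-- A game `(X, λ_w, p, G, v_q, v_u, ω)` of the Coate–Loury model.  The set of
other features is the finite product `X = X_1 × ⋯ × X_N`, encoded as the pi type
`(j : Fin N) → Xs j`.  The statistical model (Assumption 1) is encoded through a
nonempty subset `Ysub ⊆ {1, …, N}` together with the factorization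
`p(x | i, y) = pY(x_𝒴 | y) · pC(x_{-𝒴} | i, x_𝒴)`.  The cost distribution is
given by an everywhere positive density `g` with `∫ g = 1` and `∫ |c| g(c) dc < ∞`. -/
structure Game (N : ℕ) (Xs : Fin N → Type) [∀ j, Fintype (Xs j)]
    [∀ j, Nonempty (Xs j)] where
  lamw : ℝ
  lamw_pos : 0 < lamw
  lamw_lt_one : lamw < 1
  Ysub : Finset (Fin N)
  Ysub_nonempty : Ysub.Nonempty
  pY : ((j : Ysub) → Xs j.1) → Cls → ℝ
  pC : GrpI → ((j : Fin N) → Xs j) → ℝ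
  pY_pos : ∀ xY y, 0 < pY xY y
  pC_pos : ∀ i x, 0 < pC i x
  pY_sum : ∀ y, ∑ xY, pY xY y = 1
  pC_sum : ∀ (i : GrpI) (xY : (j : Ysub) → Xs j.1),
    ∑ x ∈ Finset.univ.filter
        (fun x : (j : Fin N) → Xs j => (fun j : Ysub => x j.1) = xY),
      pC i x = 1
  g : ℝ → ℝ
  g_pos : ∀ c, 0 < g c
  g_int : Integrable g
  g_norm : (∫ c, g c) = 1
  g_abs_int : Integrable fun c => |c| * g c
  vq : ℝ
  vu : ℝ
  om : ℝ
  vq_pos : 0 < vq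
  vu_pos : 0 < vu
  om_pos : 0 < om

section Policies

variable {N : ℕ} {Xs : Fin N → Type}

/-- A decision policy `d : I × X → [0,1]`. -/
def IsPolicy (d : GrpI → ((j : Fin N) → Xs j) → ℝ) : Prop :=
  ∀ i x, d i x ∈ Set.Icc (0 : ℝ) 1

/-- A decision policy when data is color-blind, `d_cb : X → [0,1]`. -/
def IsCbPolicy (dcb : ((j : Fin N) → Xs j) → ℝ) : Prop :=
  ∀ x, dcb x ∈ Set.Icc (0 : ℝ) 1

/-- `S ⊆ {1, …, N}` has the dependence property for the belief `f`:
`f` depends on `(i, x)` only up to `(i, x_S)`. -/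
def DepProp {I : Type} (f : I → ((j : Fin N) → Xs j) → ℝ)
    (S : Finset (Fin N)) : Prop :=
  ∀ (i : I) (x x' : (j : Fin N) → Xs j), (∀ j ∈ S, x j = x' j) → f i x = f i x'

/-- The minimal subset `Ŷ(f)` with the dependence property. -/
def minDep {I : Type} (f : I → ((j : Fin N) → Xs j) → ℝ) : Finset (Fin N) :=
  Finset.univ.filter fun j => ∀ S : Finset (Fin N), DepProp f S → j ∈ S

variable [∀ j, Fintype (Xs j)]

/-- Full-support probability distributions on `I × X` (the set `Δ°(I × X)`). -/
def FullSupp (μ : GrpI → ((j : Fin N) → Xs j) → ℝ) : Prop :=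
  (∀ i x, 0 < μ i x) ∧ ∑ i, ∑ x, μ i x = 1

/-- Beliefs valued in `(0, 1)`. -/
def OpenBelief (f : GrpI → ((j : Fin N) → Xs j) → ℝ) : Prop :=
  ∀ i x, f i x ∈ Set.Ioo (0 : ℝ) 1

/-- Acceptance rate of group `i`. -/
def AR (i : GrpI) (d μ : GrpI → ((j : Fin N) → Xs j) → ℝ) : ℝ :=
  (∑ x, d i x * μ i x) / ∑ x, μ i x

/-- True positive rate of group `i`. -/
def TP (i : GrpI) (d μ f : GrpI → ((j : Fin N) → Xs j) → ℝ) : ℝ :=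
  (∑ x, d i x * μ i x * f i x) / ∑ x, μ i x * f i x

/-- The equal opportunity control `k(X, μ, f)`. -/
def EOset (μ f : GrpI → ((j : Fin N) → Xs j) → ℝ) :
    Set (GrpI → ((j : Fin N) → Xs j) → ℝ) :=
  {d | IsPolicy d ∧ TP GrpI.w d μ f = TP GrpI.b d μ f}

/-- The color-blind control: all color-blind decision policies. -/
def CBset : Set (GrpI → ((j : Fin N) → Xs j) → ℝ) :=
  {d | IsPolicy d ∧ ∀ x, d GrpI.w x = d GrpI.b x}

/-- The no proxies control: policies depending on `(i,x)` only through `x_{Ŷ(f)}`. -/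
def NoProxies (_μ f : GrpI → ((j : Fin N) → Xs j) → ℝ) :
    Set (GrpI → ((j : Fin N) → Xs j) → ℝ) :=
  {d | IsPolicy d ∧
    ∀ i i' x x', (∀ j ∈ minDep f, x j = x' j) → d i x = d i' x'}

/-- `ℓ²` distance between decision policies. -/
def polDist (d d' : GrpI → ((j : Fin N) → Xs j) → ℝ) : ℝ :=
  Real.sqrt (∑ i, ∑ x, (d i x - d' i x) ^ 2)

/-- `ℓ²` distance between pairs `(μ, f)`. -/
def pairDist (μ f μ' f' : GrpI → ((j : Fin N) → Xs j) → ℝ) : ℝ :=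
  Real.sqrt ((∑ i, ∑ x, (μ i x - μ' i x) ^ 2) + ∑ i, ∑ x, (f i x - f' i x) ^ 2)

/-- `ℓ²` distance between strategy profiles `(c̄, d)`. -/
def profDist (c : GrpI → ℝ) (d : GrpI → ((j : Fin N) → Xs j) → ℝ)
    (c' : GrpI → ℝ) (d' : GrpI → ((j : Fin N) → Xs j) → ℝ) : ℝ :=
  Real.sqrt ((∑ i, (c i - c' i) ^ 2) + ∑ i, ∑ x, (d i x - d' i x) ^ 2)

end Policies

/-- Upper hemicontinuity of a correspondence on a set. -/
def UpperHemicontinuousOnCorr {α β : Type*} [TopologicalSpace α] [TopologicalSpace β]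
    (F : α → Set β) (S : Set α) : Prop :=
  ∀ a ∈ S, ∀ V : Set β, IsOpen V → F a ⊆ V → ∀ᶠ a' in nhdsWithin a S, F a' ⊆ V

/-- Lower hemicontinuity of a correspondence on a set. -/
def LowerHemicontinuousOnCorr {α β : Type*} [TopologicalSpace α] [TopologicalSpace β]
    (F : α → Set β) (S : Set α) : Prop :=
  ∀ a ∈ S, ∀ V : Set β, IsOpen V → (F a ∩ V).Nonempty →
    ∀ᶠ a' in nhdsWithin a S, (F a' ∩ V).Nonempty

namespace Game

variable {N : ℕ} {Xs : Fin N → Type} [∀ j, Fintype (Xs j)] [∀ j, Nonempty (Xs j)]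
variable (Γ : Game N Xs)

/-- Projection `x ↦ x_𝒴`. -/
def proj (x : (j : Fin N) → Xs j) : (j : Γ.Ysub) → Xs j.1 := fun j => x j.1

/-- `p(x | i, y) = p(x_𝒴 | y) · p(x_{-𝒴} | i, x_𝒴)`. -/
def p (i : GrpI) (x : (j : Fin N) → Xs j) (y : Cls) : ℝ :=
  Γ.pY (Γ.proj x) y * Γ.pC i x

/-- Group probabilities `λ_w`, `λ_b = 1 - λ_w`. -/
def lam : GrpI → ℝ := fun i =>
  match i with
  | GrpI.w => Γ.lamw
  | GrpI.b => 1 - Γ.lamw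

/-- The CDF `G` of the cost distribution. -/
def G (c : ℝ) : ℝ := ∫ t in Set.Iic c, Γ.g t

/-- The likelihood function `l(x) = p(x_𝒴 | q) / p(x_𝒴 | u)`. -/
def lhd (x : (j : Fin N) → Xs j) : ℝ :=
  Γ.pY (Γ.proj x) Cls.q / Γ.pY (Γ.proj x) Cls.u

/-- The likelihood function on `X_𝒴`. -/
def lhdY (xY : (j : Γ.Ysub) → Xs j.1) : ℝ := Γ.pY xY Cls.q / Γ.pY xY Cls.u

/-- The set of likelihood values `{l_1 < … < l_n}`. -/
def LVset : Set ℝ := Set.range Γ.lhd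

/-- The assumption that `1` is not a likelihood value
(equivalently, `WW` is single-peaked). -/
def OneNotLV : Prop := (1 : ℝ) ∉ Γ.LVset

/-- The largest likelihood value `l_n`. -/
def lmax : ℝ := sSup Γ.LVset

/-- `⌈ℓ⌉`: the smallest likelihood value `≥ ℓ`. -/
def lceil (ℓ : ℝ) : ℝ := sInf {v | v ∈ Γ.LVset ∧ ℓ ≤ v}

/-- `⌈ℓ⌉⁻`: the next smallest likelihood value below `⌈ℓ⌉` (or `l_0 = 0`). -/
def lceilm (ℓ : ℝ) : ℝ := sSup (insert 0 {v | v ∈ Γ.LVset ∧ v < Γ.lceil ℓ})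

/-- The smallest likelihood value `> ℓ`. -/
def lnext (ℓ : ℝ) : ℝ := sInf {v | v ∈ Γ.LVset ∧ ℓ < v}

/-- The true distribution of features `μ_RE` given cost thresholds `c̄`. -/
def muRE (c : GrpI → ℝ) (i : GrpI) (x : (j : Fin N) → Xs j) : ℝ :=
  Γ.lam i * (Γ.G (c i) * Γ.p i x Cls.q + (1 - Γ.G (c i)) * Γ.p i x Cls.u)

/-- The true conditional probability (calibrated belief) `f_RE` given `c̄`. -/
def fRE (c : GrpI → ℝ) (i : GrpI) (x : (j : Fin N) → Xs j) : ℝ :=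
  Γ.G (c i) * Γ.p i x Cls.q /
    (Γ.G (c i) * Γ.p i x Cls.q + (1 - Γ.G (c i)) * Γ.p i x Cls.u)

/-- Utility `U_i(c̄(i), d(i))` of the representative `i`-applicant. -/
def Uapp (i : GrpI) (ci : ℝ) (di : ((j : Fin N) → Xs j) → ℝ) : ℝ :=
  Γ.om * ∑ x, (Γ.G ci * Γ.p i x Cls.q + (1 - Γ.G ci) * Γ.p i x Cls.u) * di x -
    ∫ t in Set.Iic ci, t * Γ.g t

/-- Firm utility `U_F(d, μ, f)`. -/
def UF (d μ f : GrpI → ((j : Fin N) → Xs j) → ℝ) : ℝ :=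
  ∑ i, ∑ x, d i x * μ i x * (f i x * Γ.vq - (1 - f i x) * Γ.vu)

/-- The color-blind true distribution of features `μ_cb,RE`. -/
def mucbRE (c : GrpI → ℝ) (x : (j : Fin N) → Xs j) : ℝ :=
  Γ.muRE c GrpI.w x + Γ.muRE c GrpI.b x

/-- The color-blind true conditional probability `f_cb,RE`. -/
def fcbRE (c : GrpI → ℝ) (x : (j : Fin N) → Xs j) : ℝ :=
  (Γ.muRE c GrpI.w x * Γ.fRE c GrpI.w x + Γ.muRE c GrpI.b x * Γ.fRE c GrpI.b x) /
    Γ.mucbRE c x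

/-- Firm utility when data is color-blind. -/
def UFcb (dcb μcb fcb : ((j : Fin N) → Xs j) → ℝ) : ℝ :=
  ∑ x, dcb x * μcb x * (fcb x * Γ.vq - (1 - fcb x) * Γ.vu)

/-- `d(i | l_m)`: conditional acceptance probability at likelihood value `lv`. -/
def dcond (i : GrpI) (di : ((j : Fin N) → Xs j) → ℝ) (lv : ℝ) : ℝ :=
  (∑ x ∈ Finset.univ.filter (fun x => Γ.lhd x = lv), Γ.p i x Cls.q * di x) /
    ∑ x ∈ Finset.univ.filter (fun x => Γ.lhd x = lv), Γ.p i x Cls.q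

/-- The within-group policy `d(i)` is associated with the likelihood mixture `ℓ`. -/
def AssociatedWith (i : GrpI) (di : ((j : Fin N) → Xs j) → ℝ) (ℓ : ℝ) : Prop :=
  0 ≤ ℓ ∧ ℓ ≤ Γ.lmax ∧
    ∀ lv ∈ Γ.LVset,
      (Γ.lceil ℓ < lv → Γ.dcond i di lv = 1) ∧
      (lv = Γ.lceil ℓ →
        Γ.dcond i di lv = (Γ.lceil ℓ - ℓ) / (Γ.lceil ℓ - Γ.lceilm ℓ)) ∧
      (lv < Γ.lceil ℓ → Γ.dcond i di lv = 0)

/-- A decision policy is fair if both within-group policies are associated with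
the same likelihood mixture. -/
def Fair (d : GrpI → ((j : Fin N) → Xs j) → ℝ) : Prop :=
  ∃ ℓ, Γ.AssociatedWith GrpI.w (d GrpI.w) ℓ ∧ Γ.AssociatedWith GrpI.b (d GrpI.b) ℓ

/-- `WW(l_m) = ω ∑_{x_𝒴 : l(x_𝒴) > l_m} (p(x_𝒴|q) - p(x_𝒴|u))`. -/
def WWval (t : ℝ) : ℝ :=
  Γ.om * ∑ xY ∈ Finset.univ.filter (fun xY => t < Γ.lhdY xY),
    (Γ.pY xY Cls.q - Γ.pY xY Cls.u)

/-- The piecewise-linear function `WW` interpolating the points `(l_m, WW(l_m))`. -/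
def WW (ℓ : ℝ) : ℝ :=
  if Γ.lceil ℓ = Γ.lceilm ℓ then Γ.WWval (Γ.lceil ℓ)
  else
    (Γ.WWval (Γ.lceilm ℓ) * (Γ.lceil ℓ - ℓ) +
        Γ.WWval (Γ.lceil ℓ) * (ℓ - Γ.lceilm ℓ)) /
      (Γ.lceil ℓ - Γ.lceilm ℓ)

/-- `EĒ(l_m)`: the unique cost with `G(EĒ(l_m)) = 1 / ((v_q/v_u) l_m + 1)`. -/
def EEbar (lv : ℝ) : ℝ := sInf {cc | 1 / (Γ.vq / Γ.vu * lv + 1) ≤ Γ.G cc}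

/-- The correspondence `EE : [0, l_n] ⇒ ℝ`. -/
def EE (ℓ : ℝ) : Set ℝ :=
  if ℓ = 0 then Set.Ici (Γ.EEbar (Γ.lceil 0))
  else if ℓ = Γ.lmax then Set.Iic (Γ.EEbar Γ.lmax)
  else if ℓ ∈ Γ.LVset then Set.Icc (Γ.EEbar (Γ.lnext ℓ)) (Γ.EEbar ℓ)
  else {Γ.EEbar (Γ.lceil ℓ)}

/-- Each representative applicant's cost threshold is a best response to `d`. -/
def BestResponds (c : GrpI → ℝ) (d : GrpI → ((j : Fin N) → Xs j) → ℝ) : Prop :=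
  ∀ (i : GrpI) (c' : ℝ), Γ.Uapp i c' (d i) ≤ Γ.Uapp i (c i) (d i)

/-- An (un-controlled) equilibrium. -/
def IsEquilibrium (c : GrpI → ℝ) (d : GrpI → ((j : Fin N) → Xs j) → ℝ) : Prop :=
  IsPolicy d ∧ Γ.BestResponds c d ∧
    ∀ d', IsPolicy d' →
      Γ.UF d' (Γ.muRE c) (Γ.fRE c) ≤ Γ.UF d (Γ.muRE c) (Γ.fRE c)

/-- A `k`-controlled equilibrium, for the control `(μ, f) ↦ K μ f`. -/
def IsControlledEq
    (K : (GrpI → ((j : Fin N) → Xs j) → ℝ) → (GrpI → ((j : Fin N) → Xs j) → ℝ) →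
      Set (GrpI → ((j : Fin N) → Xs j) → ℝ))
    (c : GrpI → ℝ) (d : GrpI → ((j : Fin N) → Xs j) → ℝ) : Prop :=
  d ∈ K (Γ.muRE c) (Γ.fRE c) ∧ Γ.BestResponds c d ∧
    ∀ d' ∈ K (Γ.muRE c) (Γ.fRE c),
      Γ.UF d' (Γ.muRE c) (Γ.fRE c) ≤ Γ.UF d (Γ.muRE c) (Γ.fRE c)

/-- `𝒮_k(μ, f)`: firm-optimal policies under the control `K` at `(μ, f)`. -/
def Smax
    (K : (GrpI → ((j : Fin N) → Xs j) → ℝ) → (GrpI → ((j : Fin N) → Xs j) → ℝ) →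
      Set (GrpI → ((j : Fin N) → Xs j) → ℝ))
    (μ f : GrpI → ((j : Fin N) → Xs j) → ℝ) :
    Set (GrpI → ((j : Fin N) → Xs j) → ℝ) :=
  {d | d ∈ K μ f ∧ ∀ d' ∈ K μ f, Γ.UF d' μ f ≤ Γ.UF d μ f}

/-- A `k`-controlled `ε`-equilibrium. -/
def IsCtrlEpsEq
    (K : (GrpI → ((j : Fin N) → Xs j) → ℝ) → (GrpI → ((j : Fin N) → Xs j) → ℝ) →
      Set (GrpI → ((j : Fin N) → Xs j) → ℝ))
    (ε : ℝ) (c : GrpI → ℝ) (d : GrpI → ((j : Fin N) → Xs j) → ℝ) : Prop :=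
  ∃ μ f, FullSupp μ ∧ OpenBelief f ∧
    pairDist μ f (Γ.muRE c) (Γ.fRE c) ≤ ε ∧
    Γ.BestResponds c d ∧ d ∈ K μ f ∧ ∀ d' ∈ K μ f, Γ.UF d' μ f ≤ Γ.UF d μ f

/-- Best responses of applicants to a color-blind policy. -/
def BestRespondsCb (c : GrpI → ℝ) (dcb : ((j : Fin N) → Xs j) → ℝ) : Prop :=
  ∀ (i : GrpI) (c' : ℝ), Γ.Uapp i c' dcb ≤ Γ.Uapp i (c i) dcb

/-- An equilibrium when data is color-blind (unrestricted control). -/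
def IsCbEquilibrium (c : GrpI → ℝ) (dcb : ((j : Fin N) → Xs j) → ℝ) : Prop :=
  IsCbPolicy dcb ∧ Γ.BestRespondsCb c dcb ∧
    ∀ dcb', IsCbPolicy dcb' →
      Γ.UFcb dcb' (Γ.mucbRE c) (Γ.fcbRE c) ≤ Γ.UFcb dcb (Γ.mucbRE c) (Γ.fcbRE c)

/-- A `k_cb`-controlled equilibrium when data is color-blind. -/
def IsCbControlledEq (K : Set (((j : Fin N) → Xs j) → ℝ)) (c : GrpI → ℝ)
    (dcb : ((j : Fin N) → Xs j) → ℝ) : Prop :=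
  dcb ∈ K ∧ Γ.BestRespondsCb c dcb ∧
    ∀ dcb' ∈ K,
      Γ.UFcb dcb' (Γ.mucbRE c) (Γ.fcbRE c) ≤ Γ.UFcb dcb (Γ.mucbRE c) (Γ.fcbRE c)

end Game

/-- A control when data is color-blind: for each `X` and each
`(μ_cb, f_cb) ∈ Δ°(X) × (0,1)^X` it specifies a nonempty compact set of
color-blind decision policies. -/
structure CbControl : Type 1 where
  sets : ∀ (N : ℕ) (Xs : Fin N → Type) [∀ j, Fintype (Xs j)] [∀ j, Nonempty (Xs j)],
    (((j : Fin N) → Xs j) → ℝ) → (((j : Fin N) → Xs j) → ℝ) →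
      Set (((j : Fin N) → Xs j) → ℝ)
  nonempty : ∀ (N : ℕ) (Xs : Fin N → Type) [∀ j, Fintype (Xs j)]
    [∀ j, Nonempty (Xs j)] (μ f : ((j : Fin N) → Xs j) → ℝ),
    (∀ x, 0 < μ x) → (∑ x, μ x = 1) → (∀ x, f x ∈ Set.Ioo (0 : ℝ) 1) →
    (sets N Xs μ f).Nonempty
  compact : ∀ (N : ℕ) (Xs : Fin N → Type) [∀ j, Fintype (Xs j)]
    [∀ j, Nonempty (Xs j)] (μ f : ((j : Fin N) → Xs j) → ℝ),
    (∀ x, 0 < μ x) → (∑ x, μ x = 1) → (∀ x, f x ∈ Set.Ioo (0 : ℝ) 1) →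
    IsCompact (sets N Xs μ f)
  mem_policy : ∀ (N : ℕ) (Xs : Fin N → Type) [∀ j, Fintype (Xs j)]
    [∀ j, Nonempty (Xs j)] (μ f : ((j : Fin N) → Xs j) → ℝ),
    (∀ x, 0 < μ x) → (∑ x, μ x = 1) → (∀ x, f x ∈ Set.Ioo (0 : ℝ) 1) →
    sets N Xs μ f ⊆ {dcb | IsCbPolicy dcb}

section NPFsec
open Real Set

namespace NPF

/-- The Gaussian density with variance 1/2, i.e. `π^{-1/2} e^{-c²}`. -/
def gg : ℝ → ℝ := fun c => (Real.sqrt π)⁻¹ * Real.exp (-c ^ 2)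

lemma sqrt_pi_pos : 0 < Real.sqrt π := Real.sqrt_pos.2 Real.pi_pos

lemma gg_pos : ∀ c, 0 < gg c := fun c =>
  mul_pos (inv_pos.2 sqrt_pi_pos) (Real.exp_pos _)

lemma exp_neg_sq_int : Integrable (fun c : ℝ => Real.exp (-c ^ 2)) := by
  have h := integrable_exp_neg_mul_sq (b := (1 : ℝ)) one_pos
  simpa using h

lemma gg_int : Integrable gg := exp_neg_sq_int.const_mul _

lemma gg_norm : (∫ c, gg c) = 1 := by
  have h : (∫ c : ℝ, Real.exp (-c ^ 2)) = Real.sqrt π := by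
    have := integral_gaussian (1 : ℝ)
    simpa using this
  show (∫ c : ℝ, (Real.sqrt π)⁻¹ * Real.exp (-c ^ 2)) = 1
  rw [MeasureTheory.integral_const_mul, h]
  exact inv_mul_cancel₀ (ne_of_gt sqrt_pi_pos)

lemma mul_exp_int : Integrable (fun c : ℝ => c * Real.exp (-c ^ 2)) := by
  have h := integrable_mul_exp_neg_mul_sq (b := (1 : ℝ)) one_pos
  simpa using h

lemma abs_gg_int : Integrable (fun c : ℝ => |c| * gg c) := by
  have h : Integrable (fun c : ℝ => |c * Real.exp (-c ^ 2)|) := mul_exp_int.abs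
  have h2 : Integrable (fun c : ℝ => |c| * Real.exp (-c ^ 2)) := by
    refine h.congr (Filter.Eventually.of_forall fun c => ?_)
    show |c * Real.exp (-c ^ 2)| = |c| * Real.exp (-c ^ 2)
    rw [abs_mul, abs_of_pos (Real.exp_pos _)]
  have h3 := h2.const_mul (Real.sqrt π)⁻¹
  refine h3.congr (Filter.Eventually.of_forall fun c => ?_)
  simp [gg]; ring

lemma id_gg_int : Integrable (fun c : ℝ => c * gg c) := by
  refine abs_gg_int.mono' ?_ (Filter.Eventually.of_forall fun c => ?_)
  · exact (measurable_id.mul ((continuous_const.mul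
      (Real.continuous_exp.comp (continuous_pow 2).neg)).measurable)).aestronglyMeasurable
  · rw [Real.norm_eq_abs, abs_mul, abs_of_pos (gg_pos c)]

/-- CDF of `gg`. -/
def GG : ℝ → ℝ := fun c => ∫ t in Iic c, gg t

lemma GG_split {a b : ℝ} (hab : a ≤ b) : GG b = GG a + ∫ t in Ioc a b, gg t := by
  rw [GG, GG, ← Set.Iic_union_Ioc_eq_Iic hab,
    MeasureTheory.setIntegral_union (Set.Iic_disjoint_Ioc le_rfl) measurableSet_Ioc
      gg_int.integrableOn gg_int.integrableOn]

lemma GG_pos (c : ℝ) : 0 < GG c := by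
  rw [GG]
  rw [MeasureTheory.setIntegral_pos_iff_support_of_nonneg_ae
    (Filter.Eventually.of_forall fun t => (gg_pos t).le) gg_int.integrableOn]
  have hs : Function.support gg = Set.univ := by
    ext t; simp [Function.mem_support, ne_of_gt (gg_pos t)]
  rw [hs, Set.univ_inter]
  simp [Real.volume_Iic]

lemma GG_add_Ioi (c : ℝ) : GG c + ∫ t in Ioi c, gg t = 1 := by
  rw [GG, intervalIntegral.integral_Iic_add_Ioi gg_int.integrableOn gg_int.integrableOn,
    gg_norm]

lemma GG_lt_one (c : ℝ) : GG c < 1 := by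
  have h := GG_add_Ioi c
  have hpos : 0 < ∫ t in Ioi c, gg t := by
    rw [MeasureTheory.setIntegral_pos_iff_support_of_nonneg_ae
      (Filter.Eventually.of_forall fun t => (gg_pos t).le) gg_int.integrableOn]
    have hs : Function.support gg = Set.univ := by
      ext t; simp [Function.mem_support, ne_of_gt (gg_pos t)]
    rw [hs, Set.univ_inter]
    simp [Real.volume_Ioi]
  linarith

lemma GG_cont : Continuous GG := by
  have hP : Continuous fun b : ℝ => ∫ t in (0:ℝ)..b, gg t :=
    intervalIntegral.continuous_primitive (fun a b => gg_int.intervalIntegrable) 0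
  have : GG = fun b => GG 0 + ∫ t in (0:ℝ)..b, gg t := by
    funext b
    rcases le_total 0 b with hb | hb
    · rw [intervalIntegral.integral_of_le hb, GG_split hb]
    · rw [intervalIntegral.integral_symm, intervalIntegral.integral_of_le hb,
        GG_split hb]
      ring
  rw [this]
  exact continuous_const.add hP

lemma GG_zero : GG 0 = 1 / 2 := by
  have h := GG_add_Ioi 0
  have h2 : (∫ t in Ioi (0:ℝ), gg t) = 1 / 2 := by
    show (∫ t in Ioi (0:ℝ), (Real.sqrt π)⁻¹ * Real.exp (-t ^ 2)) = 1 / 2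
    rw [MeasureTheory.integral_const_mul]
    have h3 : (∫ t in Ioi (0:ℝ), Real.exp (-t ^ 2)) = Real.sqrt π / 2 := by
      have := integral_gaussian_Ioi (1 : ℝ)
      simpa using this
    rw [h3]
    field_simp
  linarith

lemma GG_two : 4 / 7 ≤ GG 2 := by
  have key : (∫ t in Ioi (2:ℝ), t * Real.exp (-t ^ 2)) = Real.exp (-4) / 2 := by
    have hderiv : ∀ x ∈ Ioi (2:ℝ),
        HasDerivAt (fun x : ℝ => -(Real.exp (-x ^ 2) / 2)) (x * Real.exp (-x ^ 2)) x := by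
      intro x _
      have h1 : HasDerivAt (fun x : ℝ => -x ^ 2) (-(2 * x)) x := by
        simpa using (hasDerivAt_pow 2 x).fun_neg
      have h2 : HasDerivAt (fun x : ℝ => -(Real.exp (-x ^ 2) / 2))
          (-(Real.exp (-x ^ 2) * -(2 * x) / 2)) x := (h1.exp.div_const 2).fun_neg
      convert h2 using 1
      ring
    have hcont : ContinuousWithinAt (fun x : ℝ => -(Real.exp (-x ^ 2) / 2)) (Ici 2) 2 :=
      (Continuous.continuousWithinAt (by continuity))
    have hint : IntegrableOn (fun x : ℝ => x * Real.exp (-x ^ 2)) (Ioi 2) :=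
      mul_exp_int.integrableOn
    have htend : Filter.Tendsto (fun x : ℝ => -(Real.exp (-x ^ 2) / 2)) Filter.atTop (nhds 0) := by
      have h1 : Filter.Tendsto (fun x : ℝ => -x ^ 2) Filter.atTop Filter.atBot :=
        Filter.tendsto_neg_atTop_atBot.comp (Filter.tendsto_pow_atTop two_ne_zero)
      have h2 : Filter.Tendsto (fun x : ℝ => Real.exp (-x ^ 2)) Filter.atTop (nhds 0) :=
        Real.tendsto_exp_atBot.comp h1
      have h3 := (h2.div_const 2).neg
      simpa using h3
    have := MeasureTheory.integral_Ioi_of_hasDerivAt_of_tendsto hcont hderiv hint htend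
    rw [this]
    norm_num
  have hb : (∫ t in Ioi (2:ℝ), gg t) ≤ 1 / 4 := by
    have hmono : ∀ t ∈ Ioi (2:ℝ), gg t ≤ t * Real.exp (-t ^ 2) / 2 := by
      intro t ht
      rw [gg]
      have h1 : (Real.sqrt π)⁻¹ ≤ 1 := by
        rw [inv_le_one_iff₀]
        right
        rw [show (1:ℝ) = Real.sqrt 1 from (Real.sqrt_one).symm]
        exact Real.sqrt_le_sqrt (by linarith [Real.pi_gt_three])
      have h2 : (1:ℝ) ≤ t / 2 := by
        simp only [mem_Ioi] at ht; linarith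
      nlinarith [Real.exp_pos (-t ^ 2), Real.exp_le_one_iff.2 (by nlinarith : -t^2 ≤ 0)]
    have := MeasureTheory.setIntegral_mono_on gg_int.integrableOn
      ((mul_exp_int.div_const 2).integrableOn) measurableSet_Ioi hmono
    rw [show (fun t : ℝ => t * Real.exp (-t^2) / 2) = fun t => (t * Real.exp (-t^2)) / 2 from rfl] at this
    rw [MeasureTheory.integral_div, key] at this
    have he : Real.exp (-4 : ℝ) ≤ 1 := Real.exp_le_one_iff.2 (by norm_num)
    linarith
  have := GG_add_Ioi 2
  linarith

lemma exists_cstar : ∃ c : ℝ, 0 < c ∧ GG c = 4 / 7 := by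
  have h := intermediate_value_Icc (by norm_num : (0:ℝ) ≤ 2) GG_cont.continuousOn
  have hmem : (4/7 : ℝ) ∈ Icc (GG 0) (GG 2) := by
    constructor
    · rw [GG_zero]; norm_num
    · exact GG_two
  obtain ⟨c, hc, hceq⟩ := h hmem
  refine ⟨c, ?_, hceq⟩
  rcases eq_or_lt_of_le hc.1 with h0 | h0
  · exfalso; rw [← h0, GG_zero] at hceq; norm_num at hceq
  · exact h0

def cstar : ℝ := exists_cstar.choose

lemma cstar_pos : 0 < cstar := exists_cstar.choose_spec.1

lemma GG_cstar : GG cstar = 4 / 7 := exists_cstar.choose_spec.2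

/-- Key maximization lemma: `c ↦ B·G(c) - ∫_{-∞}^c t g(t) dt` is maximized at `c = B`. -/
lemma key_max (B c' : ℝ) :
    B * GG c' - ∫ t in Iic c', t * gg t ≤ B * GG B - ∫ t in Iic B, t * gg t := by
  have hψint : Integrable (fun t : ℝ => (B - t) * gg t) := by
    have := (gg_int.const_mul B).sub id_gg_int
    refine this.congr (Filter.Eventually.of_forall fun t => ?_)
    simp only [Pi.sub_apply]
    ring
  have hrep : ∀ a : ℝ, (∫ t in Iic a, (B - t) * gg t) = B * GG a - ∫ t in Iic a, t * gg t := by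
    intro a
    have : (∫ t in Iic a, (B - t) * gg t)
        = (∫ t in Iic a, B * gg t) - ∫ t in Iic a, t * gg t := by
      rw [← MeasureTheory.integral_sub (gg_int.const_mul B).integrableOn
        id_gg_int.integrableOn]
      congr 1; funext t; ring
    rw [this, MeasureTheory.integral_const_mul]; rfl
  rw [← hrep, ← hrep]
  rcases le_total c' B with hcb | hcb
  · rw [← Set.Iic_union_Ioc_eq_Iic hcb,
      MeasureTheory.setIntegral_union (Set.Iic_disjoint_Ioc le_rfl) measurableSet_Ioc
        hψint.integrableOn hψint.integrableOn]
    have : 0 ≤ ∫ t in Ioc c' B, (B - t) * gg t :=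
      MeasureTheory.setIntegral_nonneg measurableSet_Ioc fun t ht =>
        mul_nonneg (by linarith [ht.2]) (gg_pos t).le
    linarith
  · rw [show Iic c' = Iic B ∪ Ioc B c' from (Set.Iic_union_Ioc_eq_Iic hcb).symm,
      MeasureTheory.setIntegral_union (Set.Iic_disjoint_Ioc le_rfl) measurableSet_Ioc
        hψint.integrableOn hψint.integrableOn]
    have : (∫ t in Ioc B c', (B - t) * gg t) ≤ 0 :=
      MeasureTheory.setIntegral_nonpos measurableSet_Ioc fun t ht =>
        mul_nonpos_of_nonpos_of_nonneg (by linarith [ht.1]) (gg_pos t).le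
    linarith

end NPF

namespace NPF

/-! ### The concrete game -/

def qv : Bool → Cls → ℝ := fun b y =>
  match b, y with
  | true, Cls.q => 3/4
  | true, Cls.u => 1/4
  | false, Cls.q => 1/4
  | false, Cls.u => 3/4

def Ys : Finset (Fin 2) := {0}

def i0 : {j // j ∈ Ys} := ⟨0, by decide⟩

lemma mem_Ys_eq (j : {j // j ∈ Ys}) : j = i0 := by
  have h := j.2
  simp only [Ys, Finset.mem_singleton] at h
  exact Subtype.ext h

lemma sum_xY (F : ({j // j ∈ Ys} → Bool) → ℝ) :
    ∑ xY, F xY = F (fun _ => true) + F (fun _ => false) := by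
  have hbij : Function.Bijective (fun b : Bool => (fun _ => b : {j // j ∈ Ys} → Bool)) := by
    constructor
    · intro a b h; exact congrFun h i0
    · intro x; exact ⟨x i0, funext fun j => by rw [mem_Ys_eq j]⟩
  rw [← Fintype.sum_bijective _ hbij (fun b => F (fun _ => b)) F (fun b => rfl),
    Fintype.sum_bool]

lemma sum_x (F : ((j : Fin 2) → Bool) → ℝ) :
    ∑ x, F x = F ![true, true] + F ![true, false]
      + (F ![false, true] + F ![false, false]) := by
  have hbij : Function.Bijective (fun p : Bool × Bool => (![p.1, p.2] : Fin 2 → Bool)) := by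
    constructor
    · intro p q h
      have h0 := congrFun h 0
      have h1 := congrFun h 1
      simp only [Matrix.cons_val_zero, Matrix.cons_val_one, Matrix.head_cons] at h0 h1
      exact Prod.ext h0 h1
    · intro x
      refine ⟨(x 0, x 1), funext fun i => ?_⟩
      fin_cases i <;> simp
  rw [← Fintype.sum_bijective _ hbij (fun p => F ![p.1, p.2]) F (fun p => rfl),
    Fintype.sum_prod_type, Fintype.sum_bool]
  simp [Fintype.sum_bool]

lemma sum_grpI (F : GrpI → ℝ) : ∑ i, F i = F GrpI.w + F GrpI.b := by
  rw [show (Finset.univ : Finset GrpI) = {GrpI.w, GrpI.b} from rfl,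
    Finset.sum_pair (by decide)]

lemma projY_eq (x : (j : Fin 2) → Bool) (xY : {j // j ∈ Ys} → Bool) :
    ((fun j : {j // j ∈ Ys} => x j.1) = xY) ↔ x 0 = xY i0 := by
  constructor
  · intro h; exact congrFun h i0
  · intro h; funext j; rw [mem_Ys_eq j]; exact h

def Gam : Game 2 (fun _ => Bool) where
  lamw := 1/2
  lamw_pos := by norm_num
  lamw_lt_one := by norm_num
  Ysub := Ys
  Ysub_nonempty := ⟨0, by decide⟩
  pY := fun xY y => qv (xY i0) y
  pC := fun _ _ => 1/2
  pY_pos := fun xY y => by cases h : xY i0 <;> cases y <;> simp [qv, h] <;> norm_num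
  pC_pos := fun _ _ => by norm_num
  pY_sum := fun y => by
    rw [sum_xY (fun xY => qv (xY i0) y)]
    cases y <;> norm_num [qv]
  pC_sum := by
    intro i xY
    rw [Finset.sum_filter, sum_x]
    simp only [projY_eq, Matrix.cons_val_zero]
    cases h : xY i0 <;> norm_num
  g := gg
  g_pos := gg_pos
  g_int := gg_int
  g_norm := gg_norm
  g_abs_int := abs_gg_int
  vq := 1
  vu := 4
  om := 4 * cstar
  vq_pos := one_pos
  vu_pos := by norm_num
  om_pos := by have := cstar_pos; linarith

lemma p_eval (i : GrpI) (x : (j : Fin 2) → Bool) (y : Cls) :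
    Gam.p i x y = qv (x 0) y * (1 / 2) := rfl

lemma p_pos (i : GrpI) (x : (j : Fin 2) → Bool) (y : Cls) : 0 < Gam.p i x y := by
  rw [p_eval]
  cases h : x 0 <;> cases y <;> norm_num [qv]

lemma p_sum (i : GrpI) (y : Cls) : ∑ x, Gam.p i x y = 1 := by
  rw [sum_x (fun x => Gam.p i x y)]
  simp only [p_eval]
  cases y <;> norm_num [qv]

lemma lam_pos (i : GrpI) : 0 < Gam.lam i := by
  cases i <;> norm_num [Game.lam, Gam]

lemma lam_sum : Gam.lam GrpI.w + Gam.lam GrpI.b = 1 := by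
  norm_num [Game.lam, Gam]

lemma GamG (c : ℝ) : Gam.G c = GG c := rfl

lemma fRE_dep (c : GrpI → ℝ) (i : GrpI) (x x' : (j : Fin 2) → Bool)
    (h : x 0 = x' 0) : Gam.fRE c i x = Gam.fRE c i x' := by
  rw [Game.fRE, Game.fRE, p_eval, p_eval, p_eval, p_eval, h]

lemma fRE_eval (i : GrpI) (x : (j : Fin 2) → Bool) :
    Gam.fRE (fun _ => cstar) i x = if x 0 = true then 4/5 else 4/13 := by
  rw [Game.fRE, p_eval, p_eval, show Gam.G ((fun _ : GrpI => cstar) i) = 4/7 from GG_cstar]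
  cases h : x 0 <;> norm_num [qv]

lemma muRE_pos (c : GrpI → ℝ) (i : GrpI) (x : (j : Fin 2) → Bool) :
    0 < Gam.muRE c i x := by
  rw [Game.muRE]
  have h1 := GG_pos (c i)
  have h2 := GG_lt_one (c i)
  have h3 := p_pos i x Cls.q
  have h4 := p_pos i x Cls.u
  have h5 := lam_pos i
  rw [GamG] at *
  exact mul_pos h5 (by nlinarith)

lemma muRE_sum (c : GrpI → ℝ) : ∑ i, ∑ x, Gam.muRE c i x = 1 := by
  have hx : ∀ i, ∑ x, Gam.muRE c i x = Gam.lam i := by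
    intro i
    simp only [Game.muRE]
    rw [← Finset.mul_sum, Finset.sum_add_distrib, ← Finset.mul_sum, ← Finset.mul_sum,
      p_sum, p_sum]
    ring
  rw [sum_grpI, hx, hx, lam_sum]

/-- The ε-equilibrium decision policy. -/
def dd : GrpI → ((j : Fin 2) → Bool) → ℝ := fun _ x =>
  if x 0 = true ∧ x 1 = false then 1 else 0

/-- The perturbed belief. -/
def ff (η : ℝ) : GrpI → ((j : Fin 2) → Bool) → ℝ := fun _ x =>
  if x 0 = true then (if x 1 = false then 4/5 + η else 4/5 - η) else 4/13

end NPF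

namespace NPF

open Real Set

lemma dd_policy : IsPolicy dd := by
  intro i x
  simp only [dd, Set.mem_Icc]
  split_ifs <;> norm_num

lemma ff_minDep {η : ℝ} (hη : 0 < η) (hη1 : η ≤ 1/10) :
    minDep (ff η) = (Finset.univ : Finset (Fin 2)) := by
  refine Finset.eq_univ_iff_forall.mpr fun j => ?_
  rw [minDep, Finset.mem_filter]
  refine ⟨Finset.mem_univ _, fun S hS => ?_⟩
  by_contra hjS
  fin_cases j
  · have h := hS GrpI.w ![true, false] ![false, false] ?_
    · simp only [ff, Matrix.cons_val_zero, Matrix.cons_val_one, Matrix.head_cons] at h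
      norm_num at h
      linarith
    · intro k hk
      fin_cases k
      · exact absurd hk hjS
      · rfl
  · have h := hS GrpI.w ![true, false] ![true, true] ?_
    · simp only [ff, Matrix.cons_val_zero, Matrix.cons_val_one, Matrix.head_cons] at h
      norm_num at h
      linarith
    · intro k hk
      fin_cases k
      · rfl
      · exact absurd hk hjS

lemma firm_opt {η : ℝ} (hη : 0 < η) (c : GrpI → ℝ)
    (d' : GrpI → ((j : Fin 2) → Bool) → ℝ) (hd' : IsPolicy d') :
    Gam.UF d' (Gam.muRE c) (ff η) ≤ Gam.UF dd (Gam.muRE c) (ff η) := by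
  rw [Game.UF, Game.UF]
  refine Finset.sum_le_sum fun i _ => Finset.sum_le_sum fun x _ => ?_
  obtain ⟨h0, h1⟩ := hd' i x
  have hμ := muRE_pos c i x
  have hvq : Gam.vq = 1 := rfl
  have hvu : Gam.vu = 4 := rfl
  rw [hvq, hvu]
  by_cases hx : x 0 = true ∧ x 1 = false
  · have hf : ff η i x = 4/5 + η := by
      simp only [ff]; rw [if_pos hx.1, if_pos hx.2]
    have hd : dd i x = 1 := by simp only [dd]; rw [if_pos hx]
    rw [hf, hd, one_mul]
    have hF : (0:ℝ) ≤ (4/5 + η) * 1 - (1 - (4/5 + η)) * 4 := by linarith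
    nlinarith [mul_nonneg (mul_nonneg (sub_nonneg.mpr h1) hμ.le) hF]
  · have hd : dd i x = 0 := by simp only [dd]; rw [if_neg hx]
    have hF : ff η i x * 1 - (1 - ff η i x) * 4 ≤ 0 := by
      simp only [ff]
      by_cases h0x : x 0 = true
      · have h1x : x 1 = true := by
          cases h1x' : x 1
          · exact absurd ⟨h0x, h1x'⟩ hx
          · rfl
        rw [if_pos h0x, if_neg (by simp [h1x])]
        linarith
      · rw [if_neg h0x]
        norm_num
    rw [hd, zero_mul, zero_mul]
    have := mul_nonpos_of_nonneg_of_nonpos (mul_nonneg h0 hμ.le) hF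
    linarith

lemma Uapp_eval (i : GrpI) (c'' : ℝ) :
    Gam.Uapp i c'' (dd i) = 4 * cstar * (GG c'' * (3/8) + (1 - GG c'') * (1/8))
      - ∫ t in Iic c'', t * gg t := by
  have hg : ∀ a : ℝ, (∫ t in Set.Iic a, t * Gam.g t) = ∫ t in Iic a, t * gg t :=
    fun a => rfl
  rw [Game.Uapp, hg]
  congr 1
  rw [show Gam.om = 4 * cstar from rfl]
  congr 1
  rw [sum_x (fun x => (Gam.G c'' * Gam.p i x Cls.q + (1 - Gam.G c'') * Gam.p i x Cls.u)
    * dd i x)]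
  simp only [p_eval, GamG, dd, Matrix.cons_val_zero, Matrix.cons_val_one, Matrix.head_cons]
  norm_num [qv]

lemma best_resp : Gam.BestResponds (fun _ => cstar) dd := by
  intro i c'
  rw [show (fun _ : GrpI => cstar) i = cstar from rfl, Uapp_eval, Uapp_eval]
  nlinarith [key_max cstar c']

end NPF

end NPFsec

/-- **Proposition.** The no proxies control is fragile: there exist a game and
`δ̄ > 0` such that for every `ε > 0` there is a no-proxies-controlled
`ε`-equilibrium whose `ℓ²`-distance from every no-proxies-controlled
equilibrium of the game is at least `δ̄`. -/
theorem no_proxies_control_fragile :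
    ∃ (N : ℕ) (Xs : Fin N → Type) (_ : ∀ j, Fintype (Xs j))
      (_ : ∀ j, Nonempty (Xs j)) (Γ : Game N Xs) (δbar : ℝ),
      Γ.OneNotLV ∧ 0 < δbar ∧
      ∀ ε : ℝ, 0 < ε →
        ∃ (c : GrpI → ℝ) (d : GrpI → ((j : Fin N) → Xs j) → ℝ),
          Γ.IsCtrlEpsEq (fun μ f => NoProxies μ f) ε c d ∧
          ∀ (c' : GrpI → ℝ) (d' : GrpI → ((j : Fin N) → Xs j) → ℝ),
            Γ.IsControlledEq (fun μ f => NoProxies μ f) c' d' →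
            δbar ≤ profDist c d c' d' := by
  classical
  refine ⟨2, fun _ => Bool, fun _ => inferInstance, fun _ => inferInstance, NPF.Gam, 1,
    ?_, one_pos, ?_⟩
  · rintro ⟨x, hx⟩
    rw [show NPF.Gam.lhd x = NPF.qv (x 0) Cls.q / NPF.qv (x 0) Cls.u from rfl] at hx
    cases h : x 0 <;> rw [h] at hx <;> norm_num [NPF.qv] at hx
  · intro ε hε
    have hη : 0 < min (ε/2) (1/10) := lt_min (by linarith) (by norm_num)
    have hη1 : min (ε/2) (1/10) ≤ 1/10 := min_le_right _ _
    have hη2 : min (ε/2) (1/10) ≤ ε/2 := min_le_left _ _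
    set η : ℝ := min (ε/2) (1/10) with hηdef
    refine ⟨fun _ => NPF.cstar, NPF.dd, ⟨NPF.Gam.muRE (fun _ => NPF.cstar), NPF.ff η,
      ⟨fun i x => NPF.muRE_pos _ i x, NPF.muRE_sum _⟩, ?_, ?_, NPF.best_resp, ?_, ?_⟩, ?_⟩
    · -- OpenBelief
      intro i x
      simp only [NPF.ff, Set.mem_Ioo]
      split_ifs <;> constructor <;> linarith
    · -- pairDist
      have e1 : (∑ i : GrpI, ∑ x, (NPF.Gam.muRE (fun _ => NPF.cstar) i x - NPF.Gam.muRE (fun _ => NPF.cstar) i x)^2) = 0 := by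
        simp
      have hx : ∀ i : GrpI, (∑ x, (NPF.ff η i x - NPF.Gam.fRE (fun _ => NPF.cstar) i x)^2) = 2*η^2 := by
        intro i
        rw [NPF.sum_x (fun x => (NPF.ff η i x - NPF.Gam.fRE (fun _ => NPF.cstar) i x)^2)]
        simp only [NPF.fRE_eval, NPF.ff, Matrix.cons_val_zero, Matrix.cons_val_one,
          Matrix.head_cons]
        norm_num
        ring
      have e2 : (∑ i : GrpI, ∑ x, (NPF.ff η i x - NPF.Gam.fRE (fun _ => NPF.cstar) i x)^2) = 4*η^2 := by
        rw [NPF.sum_grpI (fun i => ∑ x, (NPF.ff η i x - NPF.Gam.fRE (fun _ => NPF.cstar) i x)^2), hx, hx]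
        ring
      rw [pairDist, e1, e2, zero_add,
        show (4:ℝ)*η^2 = (2*η)^2 by ring, Real.sqrt_sq (by linarith)]
      linarith
    · -- d ∈ NoProxies
      refine ⟨NPF.dd_policy, fun i i' x x' h => ?_⟩
      have hmin := NPF.ff_minDep hη hη1
      have hx : x = x' := funext fun j => h j (by rw [hmin]; exact Finset.mem_univ j)
      rw [hx]
      rfl
    · -- firm optimality
      intro d' hd'
      exact NPF.firm_opt hη (fun _ => NPF.cstar) d' hd'.1
    · -- distance from every exact equilibrium
      intro c' d' heq
      obtain ⟨hd'mem, -, -⟩ := heq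
      obtain ⟨-, hd'dep⟩ := hd'mem
      have hdep0 : DepProp (NPF.Gam.fRE c') ({0} : Finset (Fin 2)) := fun i x x' hag =>
        NPF.fRE_dep c' i x x' (hag 0 (Finset.mem_singleton_self 0))
      have hsub : minDep (NPF.Gam.fRE c') ⊆ {0} := by
        intro j hj
        rw [minDep, Finset.mem_filter] at hj
        exact hj.2 _ hdep0
      have hagree : ∀ j ∈ minDep (NPF.Gam.fRE c'),
          (![true, false] : (j : Fin 2) → Bool) j = ![true, true] j := by
        intro j hj
        have hj0 := hsub hj
        rw [Finset.mem_singleton] at hj0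
        subst hj0
        rfl
      have hvals : ∀ i : GrpI, d' i ![true, false] = d' GrpI.w ![true, false]
          ∧ d' i ![true, true] = d' GrpI.w ![true, false] := by
        intro i
        constructor
        · exact hd'dep i GrpI.w ![true, false] ![true, false] (fun j _ => rfl)
        · exact hd'dep i GrpI.w ![true, true] ![true, false] (fun j hj => (hagree j hj).symm)
      set v := d' GrpI.w ![true, false] with hv
      have hkey : (1:ℝ) ≤ (∑ i, ((fun _ => NPF.cstar) i - c' i)^2) + ∑ i, ∑ x, (NPF.dd i x - d' i x)^2 := by
        have hxs : ∀ i : GrpI, (∑ x, (NPF.dd i x - d' i x)^2)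
            = (NPF.dd i ![true, true] - v)^2 + (NPF.dd i ![true, false] - v)^2
              + ((NPF.dd i ![false, true] - d' i ![false, true])^2
                 + (NPF.dd i ![false, false] - d' i ![false, false])^2) := by
          intro i
          rw [NPF.sum_x (fun x => (NPF.dd i x - d' i x)^2), (hvals i).1, (hvals i).2]
        have hdd1 : ∀ i : GrpI, NPF.dd i ![true, true] = 0 := fun i => by
          simp [NPF.dd]
        have hdd2 : ∀ i : GrpI, NPF.dd i ![true, false] = 1 := fun i => by
          simp [NPF.dd]
        have hge : ∀ i : GrpI, (1:ℝ)/2 ≤ ∑ x, (NPF.dd i x - d' i x)^2 := by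
          intro i
          rw [hxs i, hdd1, hdd2]
          nlinarith [sq_nonneg (NPF.dd i ![false, true] - d' i ![false, true]),
            sq_nonneg (NPF.dd i ![false, false] - d' i ![false, false]),
            sq_nonneg (1 - 2*v)]
        have h1 := hge GrpI.w
        have h2 := hge GrpI.b
        have h3 : (0:ℝ) ≤ ∑ i, ((fun _ => NPF.cstar) i - c' i)^2 :=
          Finset.sum_nonneg fun i _ => sq_nonneg _
        rw [NPF.sum_grpI (fun i => ∑ x, (NPF.dd i x - d' i x)^2)]
        linarith
      calc (1:ℝ) = Real.sqrt 1 := Real.sqrt_one.symm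
        _ ≤ profDist (fun _ => NPF.cstar) NPF.dd c' d' := by
            rw [profDist]
            exact Real.sqrt_le_sqrt hkey
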